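/- If D is a real n×n matrix with tr(D) = 0, then det(∑_{m=0}^∞ (−1)^m D^m/(m+1)!) = det(∑_{m=0}^∞ D^{2m}/(4^m (2m+1)!)); that is, the Jacobian det((1 − e^{−D})/D) of the closed-orbit map equals det(sinh(D/2)/(D/2)). -/

import Mathlib

open Matrix

open NormedSpace


section DetExp
variable {N : ℕ}
attribute [local instance] Matrix.linftyOpNormedRing Matrix.linftyOpNormedAlgebra

noncomputable def entryCLM (i j : Fin N) : Matrix (Fin N) (Fin N) ℝ →L[ℝ] ℝ :=
  LinearMap.toContinuousLinearMap
    { toFun := fun M => M i j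
      map_add' := fun _ _ => rfl
      map_smul' := fun _ _ => rfl }

theorem hasDerivAt_entry (A : Matrix (Fin N) (Fin N) ℝ) (i j : Fin N) (t : ℝ) :
    HasDerivAt (fun u : ℝ => exp (u • A) i j) ((exp (t • A) * A) i j) t := by
  exact (entryCLM i j).hasFDerivAt.comp_hasDerivAt t (hasDerivAt_exp_smul_const A t)

end DetExp
section DetExp2
variable {N : ℕ}
attribute [local instance] Matrix.linftyOpNormedRing Matrix.linftyOpNormedAlgebra

theorem hasDerivAt_det_exp_zero (A : Matrix (Fin N) (Fin N) ℝ) :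
    HasDerivAt (fun t : ℝ => (exp (t • A)).det) A.trace 0 := by
  have key : ∀ σ : Equiv.Perm (Fin N),
      HasDerivAt (fun t : ℝ => ∏ i, exp (t • A) (σ i) i)
        (∑ i, (∏ j ∈ Finset.univ.erase i, exp ((0:ℝ) • A) (σ j) j) •
          ((exp ((0:ℝ) • A) * A) (σ i) i)) 0 := by
    intro σ
    exact HasDerivAt.fun_finsetProd (fun i _ => hasDerivAt_entry A (σ i) i 0)
  have h1 : exp ((0:ℝ) • A) = 1 := by rw [zero_smul, exp_zero]
  rw [h1] at key
  have hfun : (fun t : ℝ => (exp (t • A)).det)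
      = fun t : ℝ => ∑ σ : Equiv.Perm (Fin N),
          ((Equiv.Perm.sign σ : ℤ) : ℝ) * ∏ i, exp (t • A) (σ i) i := by
    funext t; rw [Matrix.det_apply']
  rw [hfun]
  have H := HasDerivAt.fun_sum (u := Finset.univ)
    (A := fun (σ : Equiv.Perm (Fin N)) (t : ℝ) =>
      ((Equiv.Perm.sign σ : ℤ) : ℝ) * ∏ i, exp (t • A) (σ i) i)
    (A' := fun σ => ((Equiv.Perm.sign σ : ℤ) : ℝ) *
      (∑ i, (∏ j ∈ Finset.univ.erase i, (1 : Matrix (Fin N) (Fin N) ℝ) (σ j) j) •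
        (((1 : Matrix (Fin N) (Fin N) ℝ) * A) (σ i) i)))
    (fun σ _ => (key σ).const_mul _)
  refine H.congr_deriv (Eq.symm ?_)
  rw [Finset.sum_eq_single_of_mem (1 : Equiv.Perm (Fin N)) (Finset.mem_univ _)]
  · simp [Matrix.one_apply, Matrix.trace]
  · intro σ _ hσ
    have hmoved : ∀ i : Fin N, ∃ j, j ≠ i ∧ σ j ≠ j := by
      intro i
      obtain ⟨k, hk⟩ : ∃ k, σ k ≠ k := by
        by_contra h
        push_neg at h
        exact hσ (Equiv.ext h)
      by_cases hki : k = i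
      · refine ⟨σ k, ?_, ?_⟩
        · rw [hki] at hk ⊢; exact hk
        · intro h; exact hk (σ.injective h)
      · exact ⟨k, hki, hk⟩
    have : ∀ i : Fin N,
        (∏ j ∈ Finset.univ.erase i, (1 : Matrix (Fin N) (Fin N) ℝ) (σ j) j) = 0 := by
      intro i
      obtain ⟨j, hji, hj⟩ := hmoved i
      exact Finset.prod_eq_zero (Finset.mem_erase.2 ⟨hji, Finset.mem_univ _⟩)
        (Matrix.one_apply_ne hj)
    simp [this]

end DetExp2

section DetExp3
variable {N : ℕ}
attribute [local instance] Matrix.linftyOpNormedRing Matrix.linftyOpNormedAlgebra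

theorem my_det_exp (A : Matrix (Fin N) (Fin N) ℝ) :
    (exp A).det = Real.exp A.trace := by
  set φ : ℝ → ℝ := fun t => (exp (t • A)).det with hφ
  have hmul : ∀ t u : ℝ, φ (t + u) = φ t * φ u := by
    intro t u
    have : exp ((t + u) • A) = exp (t • A) * exp (u • A) := by
      rw [add_smul]
      exact Matrix.exp_add_of_commute _ _ (((Commute.refl A).smul_left t).smul_right u)
    simp only [hφ, this, Matrix.det_mul]
  have hderiv : ∀ t : ℝ, HasDerivAt φ (A.trace * φ t) t := by
    intro t
    have h1 : HasDerivAt (fun u : ℝ => φ (u - t)) (A.trace * 1) t := by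
      have inner : HasDerivAt (fun u : ℝ => u - t) 1 t := (hasDerivAt_id t).sub_const t
      have : (t : ℝ) - t = 0 := sub_self t
      exact HasDerivAt.comp t (this ▸ hasDerivAt_det_exp_zero A) inner
    have h2 := h1.const_mul (φ t)
    have heq : (fun u : ℝ => φ t * φ (u - t)) = φ := by
      funext u
      rw [← hmul t (u - t), add_sub_cancel]
    rw [heq] at h2
    exact h2.congr_deriv (by ring)
  have hg : ∀ t : ℝ, HasDerivAt (fun u => φ u * Real.exp (-A.trace * u)) 0 t := by
    intro t
    have he : HasDerivAt (fun u : ℝ => Real.exp (-A.trace * u)) (-A.trace * Real.exp (-A.trace * t)) t := by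
      have := (Real.hasDerivAt_exp (-A.trace * t)).comp t ((hasDerivAt_id t).const_mul (-A.trace))
      exact this.congr_deriv (by ring)
    have := (hderiv t).mul he
    exact this.congr_deriv (by ring)
  have hconst : ∀ t : ℝ, φ t * Real.exp (-A.trace * t) = φ 0 * Real.exp (-A.trace * 0) := by
    intro t
    exact is_const_of_deriv_eq_zero (fun u => (hg u).differentiableAt)
      (fun u => (hg u).deriv) t 0
  have hφ0 : φ 0 = 1 := by
    simp only [hφ, zero_smul, exp_zero, Matrix.det_one]
  have := hconst 1
  rw [hφ0, mul_comm, mul_one] at this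
  have h1A : φ 1 = (exp A).det := by rw [hφ]; norm_num
  rw [h1A] at this
  have : (exp A).det = (Real.exp (-A.trace * 1))⁻¹ := by
    rw [show -A.trace * 0 = 0 by ring, Real.exp_zero, one_mul] at this
    rw [mul_one]
    exact eq_inv_of_mul_eq_one_right this
  rw [this, ← Real.exp_neg]
  norm_num

end DetExp3


lemma binom_odd_sum (m : ℕ) :
    (∑ k ∈ Finset.range (m+1), if Even (m - k) then ((m+1).choose k : ℝ) else 0)
      = 2 ^ m := by
  have hrefl := Finset.sum_range_reflect
    (fun k => if Even (m - k) then ((m+1).choose k : ℝ) else 0) (m+1)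
  rw [← hrefl]
  have hterm : ∀ j ∈ Finset.range (m+1),
      (if Even (m - (m + 1 - 1 - j)) then ((m+1).choose (m + 1 - 1 - j) : ℝ) else 0)
        = (1 - (-1:ℝ)^(j+1))/2 * ((m+1).choose (j+1) : ℝ) := by
    intro j hj
    have hjm : j ≤ m := by simpa [Nat.lt_succ_iff] using hj
    have e1 : m + 1 - 1 - j = m - j := by omega
    have e2 : m - (m - j) = j := by omega
    have e3 : (m+1).choose (m - j) = (m+1).choose (j+1) := by
      rw [← Nat.choose_symm (by omega : j + 1 ≤ m + 1)]
      congr 1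
      omega
    rw [e1, e2, e3]
    rcases Nat.even_or_odd j with hev | hod
    · rw [if_pos hev, Odd.neg_one_pow hev.add_one]
      ring
    · rw [if_neg (Nat.not_even_iff_odd.mpr hod), Even.neg_one_pow hod.add_one]
      ring
  rw [Finset.sum_congr rfl hterm]
  have hA1 : (∑ j ∈ Finset.range (m+1), ((m+1).choose (j+1) : ℝ)) = 2^(m+1) - 1 := by
    have h := Finset.sum_range_succ' (fun q => ((m+1).choose q : ℝ)) (m+1)
    have h2 : (∑ q ∈ Finset.range (m+2), ((m+1).choose q : ℝ)) = 2^(m+1) := by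
      rw [← Nat.cast_sum]
      rw [Nat.sum_range_choose]
      push_cast; ring
    rw [h2] at h
    simp only [Nat.choose_zero_right, Nat.cast_one] at h
    linarith
  have hA2 : (∑ j ∈ Finset.range (m+1), (-1:ℝ)^(j+1) * ((m+1).choose (j+1) : ℝ)) = -1 := by
    have h := Finset.sum_range_succ' (fun q => (-1:ℝ)^q * ((m+1).choose q : ℝ)) (m+1)
    have h2 : (∑ q ∈ Finset.range (m+2), (-1:ℝ)^q * ((m+1).choose q : ℝ)) = 0 := by
      have hz := Int.alternating_sum_range_choose_of_ne (Nat.succ_ne_zero m)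
      have := congrArg (fun z : ℤ => (z : ℝ)) hz
      push_cast at this
      rw [← this]
    rw [h2] at h
    simp only [Nat.choose_zero_right, Nat.cast_one, pow_zero, one_mul] at h
    linarith
  have expand : ∀ j ∈ Finset.range (m+1),
      (1 - (-1:ℝ)^(j+1))/2 * ((m+1).choose (j+1) : ℝ)
        = (1/2) * ((m+1).choose (j+1) : ℝ) - (1/2) * ((-1:ℝ)^(j+1) * ((m+1).choose (j+1) : ℝ)) := by
    intro j _; ring
  rw [Finset.sum_congr rfl expand, Finset.sum_sub_distrib, ← Finset.mul_sum, ← Finset.mul_sum,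
    hA1, hA2]
  ring

lemma coeff_sum (m : ℕ) :
    (∑ k ∈ Finset.range (m+1),
      (((k.factorial : ℝ))⁻¹ * (-2⁻¹ : ℝ)^k) *
      (if Even (m - k) then ((2:ℝ)^(m-k) * (((m-k)+1).factorial : ℝ))⁻¹ else 0))
      = (-1:ℝ)^m * (((m+1).factorial : ℝ))⁻¹ := by
  have hterm : ∀ k ∈ Finset.range (m+1),
      (((k.factorial : ℝ))⁻¹ * (-2⁻¹ : ℝ)^k) *
      (if Even (m - k) then ((2:ℝ)^(m-k) * (((m-k)+1).factorial : ℝ))⁻¹ else 0)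
        = ((-1:ℝ)^m * (((m+1).factorial : ℝ))⁻¹ * ((2:ℝ)^m)⁻¹) *
          (if Even (m - k) then (((m+1).choose k : ℕ) : ℝ) else 0) := by
    intro k hk
    have hkm : k ≤ m := by simpa [Nat.lt_succ_iff] using hk
    rcases Nat.even_or_odd (m - k) with hev | hod
    · rw [if_pos hev, if_pos hev]
      have hsign : (-1:ℝ)^k = (-1:ℝ)^m := by
        have : m = k + (m - k) := by omega
        rw [this, pow_add, hev.neg_one_pow, mul_one]
      have hchoose : (((m+1).choose k : ℕ) : ℝ)
          = ((m+1).factorial : ℝ) / ((k.factorial : ℝ) * (((m-k)+1).factorial : ℝ)) := by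
        rw [Nat.cast_choose ℝ (by omega : k ≤ m + 1),
          show m + 1 - k = (m - k) + 1 from by omega]
      have hpow : (2:ℝ)^k * (2:ℝ)^(m-k) = (2:ℝ)^m := by
        rw [← pow_add]; congr 1; omega
      have hne1 : (k.factorial : ℝ) ≠ 0 := Nat.cast_ne_zero.2 k.factorial_ne_zero
      have hne2 : ((((m-k))+1).factorial : ℝ) ≠ 0 := Nat.cast_ne_zero.2 (Nat.factorial_ne_zero _)
      have hne3 : (((m+1)).factorial : ℝ) ≠ 0 := Nat.cast_ne_zero.2 (Nat.factorial_ne_zero _)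
      rw [hchoose]
      have hneg : (-2⁻¹ : ℝ)^k = (-1:ℝ)^k * ((2:ℝ)^k)⁻¹ := by
        rw [neg_pow, inv_pow]
      rw [hneg, hsign]
      field_simp
      rw [← hpow]
    · rw [if_neg (Nat.not_even_iff_odd.2 hod), if_neg (Nat.not_even_iff_odd.2 hod)]
      ring
  rw [Finset.sum_congr rfl hterm, ← Finset.mul_sum, binom_odd_sum]
  have : ((2:ℝ)^m)⁻¹ * (2:ℝ)^m = 1 := by
    rw [inv_mul_cancel₀ (by positivity)]
  calc (-1:ℝ)^m * (((m+1).factorial : ℝ))⁻¹ * ((2:ℝ)^m)⁻¹ * 2^m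
      = (-1:ℝ)^m * (((m+1).factorial : ℝ))⁻¹ * (((2:ℝ)^m)⁻¹ * 2^m) := by ring
    _ = (-1:ℝ)^m * (((m+1).factorial : ℝ))⁻¹ := by rw [this, mul_one]


section Series
variable {n : ℕ}
attribute [local instance] Matrix.linftyOpNormedRing Matrix.linftyOpNormedAlgebra
  Matrix.linftyOpIsBoundedSMul Matrix.linftyOpNormedSpace
set_option maxHeartbeats 1000000
set_option synthInstance.maxHeartbeats 400000

lemma summable_norm_aux (D : Matrix (Fin n) (Fin n) ℝ) (c : ℕ → ℝ)
    (hc : ∀ k, ‖c k‖ ≤ ((k.factorial : ℝ))⁻¹) :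
    Summable fun k => ‖c k • D ^ k‖ := by
  set K : ℝ := max ‖(1 : Matrix (Fin n) (Fin n) ℝ)‖ 1 with hK
  have hK1 : (1:ℝ) ≤ K := le_max_right _ _
  have hpow : ∀ k : ℕ, ‖D ^ k‖ ≤ K * ‖D‖ ^ k := by
    intro k
    induction k with
    | zero =>
      rw [pow_zero, pow_zero, mul_one]
      exact le_max_left _ _
    | succ k ih =>
      calc ‖D ^ (k+1)‖ = ‖D ^ k * D‖ := by rw [pow_succ]
        _ ≤ ‖D ^ k‖ * ‖D‖ := norm_mul_le _ _
        _ ≤ (K * ‖D‖ ^ k) * ‖D‖ := by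
            apply mul_le_mul_of_nonneg_right ih (norm_nonneg D)
        _ = K * ‖D‖ ^ (k+1) := by ring
  refine Summable.of_nonneg_of_le (fun k => norm_nonneg _) ?_
    ((Real.summable_pow_div_factorial ‖D‖).mul_left K)
  intro k
  rw [norm_smul]
  have h1 : ‖c k‖ ≤ ((k.factorial : ℝ))⁻¹ := hc k
  have hfac : (0:ℝ) < (k.factorial : ℝ) := by positivity
  calc ‖c k‖ * ‖D ^ k‖ ≤ ((k.factorial : ℝ))⁻¹ * (K * ‖D‖ ^ k) := by
        apply mul_le_mul h1 (hpow k) (norm_nonneg _) (by positivity)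
  _ = K * (‖D‖ ^ k / (k.factorial : ℝ)) := by field_simp

lemma key_series (D : Matrix (Fin n) (Fin n) ℝ) :
    (∑' m : ℕ, (((-1 : ℝ) ^ m * ((m + 1).factorial : ℝ)⁻¹)) • D ^ m)
      = exp ((-2⁻¹ : ℝ) • D) *
        (∑' p : ℕ, (if Even p then ((2:ℝ)^p * ((p+1).factorial : ℝ))⁻¹ else 0) • D ^ p) := by
  set f : ℕ → Matrix (Fin n) (Fin n) ℝ :=
    fun k => (((k.factorial : ℝ))⁻¹ * (-2⁻¹ : ℝ)^k) • D ^ k with hfdef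
  set g : ℕ → Matrix (Fin n) (Fin n) ℝ :=
    fun p => (if Even p then ((2:ℝ)^p * ((p+1).factorial : ℝ))⁻¹ else 0) • D ^ p with hgdef
  have hf : Summable fun k => ‖f k‖ := by
    apply summable_norm_aux
    intro k
    rw [Real.norm_eq_abs, abs_mul, abs_pow, abs_neg,
      abs_of_nonneg (by norm_num : (0:ℝ) ≤ (2⁻¹:ℝ)),
      abs_of_nonneg (by positivity : (0:ℝ) ≤ ((k.factorial:ℝ))⁻¹)]
    apply mul_le_of_le_one_right (by positivity)
    exact pow_le_one₀ (by norm_num) (by norm_num)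
  have hg : Summable fun p => ‖g p‖ := by
    apply summable_norm_aux
    intro p
    rw [Real.norm_eq_abs]
    rcases Nat.even_or_odd p with hev | hod
    · rw [if_pos hev, abs_inv, abs_mul, abs_pow, abs_two,
        abs_of_nonneg (by positivity : (0:ℝ) ≤ ((p+1).factorial : ℝ))]
      have h1 : (p.factorial : ℝ) ≤ (2:ℝ)^p * ((p+1).factorial : ℝ) := by
        have e1 : (1:ℝ) ≤ (2:ℝ)^p := one_le_pow₀ (by norm_num)
        have e2 : (p.factorial : ℝ) ≤ ((p+1).factorial : ℝ) := by
          exact_mod_cast Nat.factorial_le (Nat.le_succ p)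
        nlinarith [(by positivity : (0:ℝ) ≤ (p.factorial : ℝ)), (by positivity : (0:ℝ) ≤ ((p+1).factorial : ℝ))]
      exact inv_anti₀ (by positivity) h1
    · rw [if_neg (Nat.not_even_iff_odd.2 hod), abs_zero]
      positivity
  have hexp : exp ((-2⁻¹ : ℝ) • D) = ∑' k, f k := by
    rw [exp_eq_tsum ℝ]
    apply tsum_congr
    intro k
    rw [smul_pow, smul_smul]
  have hprod := tsum_mul_tsum_eq_tsum_sum_range_of_summable_norm hf hg
  rw [hexp]
  erw [hprod]
  apply tsum_congr
  intro m
  have hterm : ∀ k ∈ Finset.range (m+1),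
      f k * g (m - k)
        = ((((k.factorial : ℝ))⁻¹ * (-2⁻¹ : ℝ)^k) *
            (if Even (m - k) then ((2:ℝ)^(m-k) * (((m-k)+1).factorial : ℝ))⁻¹ else 0)) • D ^ m := by
    intro k hk
    have hkm : k ≤ m := by simpa [Nat.lt_succ_iff] using hk
    rw [hfdef, hgdef]
    rw [smul_mul_assoc, mul_smul_comm, smul_smul, ← pow_add,
      show k + (m - k) = m from by omega]
  rw [Finset.sum_congr rfl hterm, ← Finset.sum_smul, coeff_sum]

lemma g_reindex (D : Matrix (Fin n) (Fin n) ℝ) :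
    (∑' p : ℕ, (if Even p then ((2:ℝ)^p * ((p+1).factorial : ℝ))⁻¹ else 0) • D ^ p)
      = ∑' m : ℕ, ((4 ^ m * (2 * m + 1).factorial : ℝ))⁻¹ • D ^ (2 * m) := by
  symm
  have hinj : Function.Injective (fun m : ℕ => 2 * m) := fun a b h => by
    simp only [] at h; omega
  have hsupp : Function.support
      (fun p : ℕ => (if Even p then ((2:ℝ)^p * ((p+1).factorial : ℝ))⁻¹ else 0) • D ^ p)
      ⊆ Set.range (fun m : ℕ => 2 * m) := by
    intro p hp
    rcases Nat.even_or_odd p with hev | hod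
    · obtain ⟨c, hc⟩ := hev
      refine ⟨c, ?_⟩
      show 2 * c = p
      omega
    · exfalso
      apply hp
      show (if Even p then ((2:ℝ)^p * ((p+1).factorial : ℝ))⁻¹ else 0) • D ^ p = 0
      rw [if_neg (Nat.not_even_iff_odd.2 hod), zero_smul]
  have := Function.Injective.tsum_eq hinj hsupp
  rw [← this]
  apply tsum_congr
  intro m
  have hev : Even (2 * m) := even_two_mul m
  show ((4 ^ m * (2 * m + 1).factorial : ℝ))⁻¹ • D ^ (2 * m)
      = (if Even (2 * m) then ((2:ℝ)^(2 * m) * ((2 * m + 1).factorial : ℝ))⁻¹ else 0) • D ^ (2 * m)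
  rw [if_pos hev]
  congr 2
  rw [pow_mul]
  norm_num

lemma final_aux (D : Matrix (Fin n) (Fin n) ℝ) (hD : D.trace = 0) :
    (∑' m : ℕ, (((-1 : ℝ) ^ m * ((m + 1).factorial : ℝ)⁻¹)) • D ^ m).det
      = (∑' m : ℕ, ((4 ^ m * (2 * m + 1).factorial : ℝ))⁻¹ • D ^ (2 * m)).det := by
  rw [key_series D, Matrix.det_mul, my_det_exp, Matrix.trace_smul, hD]
  rw [g_reindex D]
  norm_num

end Series


/-- If `tr D = 0`, then the Jacobian `det((1 - e^{-D})/D)` of the closed-orbit map equals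
`det(sinh(D/2)/(D/2))`, both expressed as everywhere convergent matrix power series. -/
theorem statement8 (n : ℕ) (D : Matrix (Fin n) (Fin n) ℝ) (hD : D.trace = 0) :
    (∑' m : ℕ, (((-1 : ℝ) ^ m * ((m + 1).factorial : ℝ)⁻¹)) • D ^ m).det
      = (∑' m : ℕ, ((4 ^ m * (2 * m + 1).factorial : ℝ))⁻¹ • D ^ (2 * m)).det := by
  exact final_aux D hD
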